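/- Let ψ := c₀φ₀ + c₁φ₁ + c₂φ₂ + c₃φ₃ be a nonzero state in the symmetric sector of three qubits. If both the three-tangle τ(ψ) = 4|X₃² − 4X₂X₄| and the pairwise tangle τ_AB(ψ) = 2(|X₃|² + 2|X₂|² + 2|X₄|² − |X₃² − 4X₂X₄|) are zero, then ψ is separable: there exists φ ∈ ℂ² with ψ = φ⊗φ⊗φ. -/

import Mathlib

open Matrix Complex

noncomputable section

/-- Index type for three qubits: `(ℂ²)^{⊗3} ≅ ℂ⁸` with basis `|jkl⟩`. -/
abbrev Q3 := Fin 2 × Fin 2 × Fin 2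

/-- Pauli matrix σx. -/
def sx : Matrix (Fin 2) (Fin 2) ℂ := !![0, 1; 1, 0]
/-- Pauli matrix σy. -/
def sy : Matrix (Fin 2) (Fin 2) ℂ := !![0, I; -I, 0]
/-- Pauli matrix σz. -/
def sz : Matrix (Fin 2) (Fin 2) ℂ := !![1, 0; 0, -1]

/-- Tensor (Kronecker) product of three 2×2 matrices, as an 8×8 matrix. -/
def tens3 (A B C : Matrix (Fin 2) (Fin 2) ℂ) : Matrix Q3 Q3 ℂ :=
  fun p q => A p.1 q.1 * B p.2.1 q.2.1 * C p.2.2 q.2.2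

/-- Computational basis vector `|jkl⟩`. -/
def ket (j k l : Fin 2) : Q3 → ℂ := fun p => if p = (j, k, l) then 1 else 0

/-- φ₀ = |000⟩. -/
def phi0 : Q3 → ℂ := ket 0 0 0
/-- φ₁ = |100⟩+|010⟩+|001⟩. -/
def phi1 : Q3 → ℂ := ket 1 0 0 + ket 0 1 0 + ket 0 0 1
/-- φ₂ = |110⟩+|011⟩+|101⟩. -/
def phi2 : Q3 → ℂ := ket 1 1 0 + ket 0 1 1 + ket 1 0 1
/-- φ₃ = |111⟩. -/
def phi3 : Q3 → ℂ := ket 1 1 1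

/-- Tensor product of three vectors in ℂ². -/
def tensv (α β γ : Fin 2 → ℂ) : Q3 → ℂ := fun p => α p.1 * β p.2.1 * γ p.2.2

/-- if a nonzero symmetric-sector state ψ = c₀φ₀+c₁φ₁+c₂φ₂+c₃φ₃ has
vanishing three-tangle τ = 4|X₃²−4X₂X₄| and vanishing pairwise tangle
τ_AB = 2(|X₃|²+2|X₂|²+2|X₄|²−|X₃²−4X₂X₄|), then ψ = φ⊗φ⊗φ for some φ ∈ ℂ². -/
theorem statement9 (c0 c1 c2 c3 : ℂ)
    (hne : c0 • phi0 + c1 • phi1 + c2 • phi2 + c3 • phi3 ≠ 0)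
    (htau : 4 * ‖(c0 * c3 - c1 * c2) ^ 2
      - 4 * (c0 * c2 - c1 ^ 2) * (c1 * c3 - c2 ^ 2)‖ = 0)
    (htauAB : 2 * (‖c0 * c3 - c1 * c2‖ ^ 2
      + 2 * ‖c0 * c2 - c1 ^ 2‖ ^ 2
      + 2 * ‖c1 * c3 - c2 ^ 2‖ ^ 2
      - ‖(c0 * c3 - c1 * c2) ^ 2
          - 4 * (c0 * c2 - c1 ^ 2) * (c1 * c3 - c2 ^ 2)‖) = 0) :
    ∃ φ : Fin 2 → ℂ,
      c0 • phi0 + c1 • phi1 + c2 • phi2 + c3 • phi3 = tensv φ φ φ := by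

  -- Extract the vanishing of X₂, X₃, X₄.
  have hD : ‖(c0 * c3 - c1 * c2) ^ 2
      - 4 * (c0 * c2 - c1 ^ 2) * (c1 * c3 - c2 ^ 2)‖ = 0 := by linarith
  have hA : ‖c0 * c3 - c1 * c2‖ = 0 := by
    nlinarith [norm_nonneg (c0 * c3 - c1 * c2),
      norm_nonneg (c0 * c2 - c1 ^ 2), norm_nonneg (c1 * c3 - c2 ^ 2),
      sq_nonneg (‖c0 * c3 - c1 * c2‖),
      sq_nonneg (‖c0 * c2 - c1 ^ 2‖), sq_nonneg (‖c1 * c3 - c2 ^ 2‖)]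
  have hB : ‖c0 * c2 - c1 ^ 2‖ = 0 := by
    nlinarith [norm_nonneg (c0 * c3 - c1 * c2),
      norm_nonneg (c0 * c2 - c1 ^ 2), norm_nonneg (c1 * c3 - c2 ^ 2),
      sq_nonneg (‖c0 * c3 - c1 * c2‖),
      sq_nonneg (‖c0 * c2 - c1 ^ 2‖), sq_nonneg (‖c1 * c3 - c2 ^ 2‖)]
  have hC : ‖c1 * c3 - c2 ^ 2‖ = 0 := by
    nlinarith [norm_nonneg (c0 * c3 - c1 * c2),
      norm_nonneg (c0 * c2 - c1 ^ 2), norm_nonneg (c1 * c3 - c2 ^ 2),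
      sq_nonneg (‖c0 * c3 - c1 * c2‖),
      sq_nonneg (‖c0 * c2 - c1 ^ 2‖), sq_nonneg (‖c1 * c3 - c2 ^ 2‖)]
  have h3 : c0 * c3 = c1 * c2 := by
    have := norm_eq_zero.mp hA; linear_combination this
  have h2 : c0 * c2 = c1 ^ 2 := by
    have := norm_eq_zero.mp hB; linear_combination this
  have h4 : c1 * c3 = c2 ^ 2 := by
    have := norm_eq_zero.mp hC; linear_combination this
  by_cases h0 : c0 = 0
  · have h1 : c1 = 0 := by
      have : c1 ^ 2 = 0 := by rw [← h2, h0]; ring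
      exact pow_eq_zero_iff (by norm_num) |>.mp this
    have hc2 : c2 = 0 := by
      have : c2 ^ 2 = 0 := by rw [← h4, h1]; ring
      exact pow_eq_zero_iff (by norm_num) |>.mp this
    obtain ⟨b, hb⟩ := Complex.isAlgClosed.exists_pow_nat_eq c3 (n := 3) (by norm_num)
    refine ⟨![0, b], ?_⟩
    funext p
    obtain ⟨j, k, l⟩ := p
    fin_cases j <;> fin_cases k <;> fin_cases l <;>
      · simp [phi0, phi1, phi2, phi3, ket, tensv, h0, h1, hc2, Prod.ext_iff]
        try linear_combination -hb
  · obtain ⟨a, ha⟩ := Complex.isAlgClosed.exists_pow_nat_eq c0 (n := 3) (by norm_num)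
    have ha0 : a ≠ 0 := by
      intro h; apply h0; rw [← ha, h]; ring
    subst ha
    refine ⟨![a, c1 / a ^ 2], ?_⟩
    funext p
    obtain ⟨j, k, l⟩ := p
    fin_cases j <;> fin_cases k <;> fin_cases l <;>
      · simp [phi0, phi1, phi2, phi3, ket, tensv, Prod.ext_iff]
        try field_simp
        first
        | done
        | ring1
        | linear_combination h2
        | linear_combination a * h2
        | linear_combination a ^ 3 * h3 + c1 * h2
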